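/- Let A be an allotment and let L be a loop of A of type (ii): a directed path of transfer edges of Γ(A) on pairwise distinct service centers with pairwise distinct demand units from s_i to s_j, together with the penalty transfer edge from s_j to s_i (of weight p_{s_j}(o_{s_j}(A)+1) − p_{s_i}(o_{s_i}(A))). Let A' be the allotment obtained by removing L from A. Then o_{s_i}(A') = o_{s_i}(A) − 1, o_{s_j}(A') = o_{s_j}(A) + 1, o_s(A') = o_s(A) for all other s, and Cost(A') = Cost(A) + cost(L). In particular, if cost(L) < 0 then A is not optimal. -/

import Mathlib

open Finset

/-- Cyclic successor on `Fin n`. -/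
def cnext {n : ℕ} (t : Fin n) : Fin n := ⟨(t.val + 1) % n, Nat.mod_lt _ t.pos⟩

section LBDD

variable {D S : Type*} [Fintype D] [DecidableEq D] [Fintype S] [DecidableEq S]

/-- Occupancy of a service center `s` under allotment `A`: the number of demand
units assigned to `s`. -/
def occ (A : D → S) (s : S) : ℕ := (Finset.univ.filter fun d => A d = s).card

/-- Total cost of an allotment: assignment costs plus accumulated per-allotment penalties. -/
def cost (CM : D → S → ℤ) (p : S → ℕ → ℤ) (A : D → S) : ℤ :=
  (∑ d, CM d (A d)) + ∑ s, ∑ j ∈ Finset.Icc 1 (occ A s), p s j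

/-- Weight of the penalty transfer edge from `si` to `sj` under allotment `A`. -/
def wpen (p : S → ℕ → ℤ) (A : D → S) (si sj : S) : ℤ :=
  p si (occ A si + 1) - p sj (occ A sj)

/-- A loop: a cyclic sequence of `m` edges; edge `t` is directed from `vtx t` to
`vtx (cnext t)`; if `dem t = some d` it is a transfer edge moving demand unit `d`,
and if `dem t = none` it is a penalty transfer edge. -/
structure Loop (S D : Type*) where
  m : ℕ
  vtx : Fin m → S
  dem : Fin m → Option D

/-- `L` is a loop of allotment `A`: at least two pairwise distinct service centers,
each transfer edge moves a demand unit currently assigned to its tail, the demand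
units are pairwise distinct, and there is at most one penalty transfer edge
(no penalty edge: type (i), a cycle of transfer edges; one penalty edge: type (ii),
a path of transfer edges closed by a penalty transfer edge). -/
def IsLoop (A : D → S) (L : Loop S D) : Prop :=
  2 ≤ L.m ∧ Function.Injective L.vtx ∧
  (∀ t d, L.dem t = some d → A d = L.vtx t) ∧
  (∀ t t' d, L.dem t = some d → L.dem t' = some d → t = t') ∧
  (∀ t t', L.dem t = none → L.dem t' = none → t = t')

/-- Weight of edge `t` of loop `L`. -/
def edgeWt (CM : D → S → ℤ) (p : S → ℕ → ℤ) (A : D → S) (L : Loop S D) (t : Fin L.m) : ℤ :=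
  match L.dem t with
  | some d => CM d (L.vtx (cnext t)) - CM d (L.vtx t)
  | none => wpen p A (L.vtx t) (L.vtx (cnext t))

/-- Cost of a loop: the sum of the weights of its edges. -/
def loopCost (CM : D → S → ℤ) (p : S → ℕ → ℤ) (A : D → S) (L : Loop S D) : ℤ :=
  ∑ t, edgeWt CM p A L t

/-- `A` induces a negative loop. -/
def InducesNegLoop (CM : D → S → ℤ) (p : S → ℕ → ℤ) (A : D → S) : Prop :=
  ∃ L : Loop S D, IsLoop A L ∧ loopCost CM p A L < 0

/-- Removing a loop from `A`: for each transfer edge, reassign its demand unit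
from the tail to the head of the edge. -/
noncomputable def removeLoop (A : D → S) (L : Loop S D) : D → S := fun x =>
  if h : ∃ t, L.dem t = some x then L.vtx (cnext (Classical.choose h)) else A x

end LBDD

section Aux

variable {D S : Type*} [Fintype D] [DecidableEq D] [Fintype S] [DecidableEq S]

lemma cnext_injective {n : ℕ} : Function.Injective (cnext (n := n)) := by
  intro a b h
  have h' : (a.val + 1) % n = (b.val + 1) % n := congrArg Fin.val h
  have h2 : a.val % n = b.val % n := Nat.ModEq.add_right_cancel' 1 h'
  exact Fin.ext (by rwa [Nat.mod_eq_of_lt a.isLt, Nat.mod_eq_of_lt b.isLt] at h2)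

omit [Fintype D] [Fintype S] [DecidableEq S] in
lemma removeLoop_eq_of_dem (A : D → S) (L : Loop S D)
    (hdinj : ∀ t t' d, L.dem t = some d → L.dem t' = some d → t = t')
    {t : Fin L.m} {d : D} (h : L.dem t = some d) :
    removeLoop A L d = L.vtx (cnext t) := by
  have he : ∃ t, L.dem t = some d := ⟨t, h⟩
  have hc : Classical.choose he = t := hdinj _ _ _ (Classical.choose_spec he) h
  rw [removeLoop]
  simp only [dif_pos he, hc]

omit [DecidableEq D] [Fintype S] in
lemma occ_cast (A : D → S) (s : S) :
    (occ A s : ℤ) = ∑ d, if A d = s then (1 : ℤ) else 0 := by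
  rw [occ, Finset.card_filter]
  push_cast [apply_ite (Nat.cast : ℕ → ℤ)]
  rfl

lemma sum_removeLoop_diff (A : D → S) (L : Loop S D)
    (hmem : ∀ t d, L.dem t = some d → A d = L.vtx t)
    (hdinj : ∀ t t' d, L.dem t = some d → L.dem t' = some d → t = t')
    (t0 : Fin L.m) (ht0 : L.dem t0 = none)
    (dm : Fin L.m → D) (hdm : ∀ t, t ≠ t0 → L.dem t = some (dm t))
    (f : D → S → ℤ) :
    (∑ d, f d (removeLoop A L d)) - (∑ d, f d (A d)) =
      ∑ t ∈ univ.erase t0, (f (dm t) (L.vtx (cnext t)) - f (dm t) (L.vtx t)) := by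
  set g : D → ℤ := fun d => f d (removeLoop A L d) - f d (A d) with hg
  have hsub : (∑ d, f d (removeLoop A L d)) - (∑ d, f d (A d)) = ∑ d, g d := by
    rw [Finset.sum_sub_distrib]
  set M : Finset D := (univ.erase t0).image dm with hM
  have hzero : ∀ d ∈ univ, d ∉ M → g d = 0 := by
    intro d _ hd
    have hno : ¬ ∃ t, L.dem t = some d := by
      rintro ⟨t, ht⟩
      have htne : t ≠ t0 := by intro h; rw [h, ht0] at ht; cases ht
      have : dm t = d := Option.some.inj ((hdm t htne).symm.trans ht)
      exact hd (Finset.mem_image.2 ⟨t, Finset.mem_erase.2 ⟨htne, Finset.mem_univ t⟩, this⟩)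
    simp [hg, removeLoop, dif_neg hno]
  have h1 : ∑ d, g d = ∑ d ∈ M, g d :=
    (Finset.sum_subset (Finset.subset_univ M) hzero).symm
  have h2 : ∑ d ∈ M, g d = ∑ t ∈ univ.erase t0, g (dm t) := by
    rw [hM]
    refine Finset.sum_image ?_
    intro x hx y hy hxy
    exact hdinj _ _ _ (hdm x (Finset.mem_erase.1 hx).1)
      (hxy ▸ hdm y (Finset.mem_erase.1 hy).1)
  rw [hsub, h1, h2]
  refine Finset.sum_congr rfl ?_
  intro t ht
  have htne := (Finset.mem_erase.1 ht).1
  have hB : removeLoop A L (dm t) = L.vtx (cnext t) :=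
    removeLoop_eq_of_dem A L hdinj (hdm t htne)
  have hA : A (dm t) = L.vtx t := hmem t _ (hdm t htne)
  simp [hg, hB, hA]

end Aux

theorem remove_path_loop_from_allotment
    (D S : Type) [Fintype D] [DecidableEq D] [Fintype S] [DecidableEq S]
    (CM : D → S → ℤ) (c : S → ℕ) (p : S → ℕ → ℤ)
    (hp0 : ∀ s j, j ≤ c s → p s j = 0)
    (hppos : ∀ s j, c s < j → 0 < p s j)
    (hpmono : ∀ s j, c s < j → p s j ≤ p s (j + 1))
    (A : D → S) (L : Loop S D) (hL : IsLoop A L)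
    (t0 : Fin L.m) (ht0 : L.dem t0 = none) :
    ((occ (removeLoop A L) (L.vtx (cnext t0)) : ℤ) = (occ A (L.vtx (cnext t0)) : ℤ) - 1) ∧
    occ (removeLoop A L) (L.vtx t0) = occ A (L.vtx t0) + 1 ∧
    (∀ s, s ≠ L.vtx (cnext t0) → s ≠ L.vtx t0 → occ (removeLoop A L) s = occ A s) ∧
    cost CM p (removeLoop A L) = cost CM p A + loopCost CM p A L ∧
    (loopCost CM p A L < 0 → ¬ (∀ B : D → S, cost CM p A ≤ cost CM p B)) := by
  obtain ⟨hm, hvinj, hmem, hdinj, hninj⟩ := hL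
  set B := removeLoop A L with hBdef
  have hne : cnext t0 ≠ t0 := by
    intro h
    have h' : (t0.val + 1) % L.m = t0.val := congrArg Fin.val h
    have hlt := t0.isLt
    rcases Nat.lt_or_ge (t0.val + 1) L.m with hc | hc
    · rw [Nat.mod_eq_of_lt hc] at h'; omega
    · have hmm : t0.val + 1 = L.m := by omega
      rw [hmm, Nat.mod_self] at h'; omega
  have hv_ne : L.vtx t0 ≠ L.vtx (cnext t0) := fun h => hne (hvinj h).symm
  have hdsome : ∀ t, t ≠ t0 → ∃ d, L.dem t = some d := by
    intro t ht
    cases hh : L.dem t with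
    | none => exact absurd (hninj t t0 hh ht0) ht
    | some d => exact ⟨d, rfl⟩
  obtain ⟨d0, hd0⟩ := hdsome (cnext t0) hne
  set dm : Fin L.m → D := fun t => (L.dem t).getD d0 with hdmdef
  have hdm : ∀ t, t ≠ t0 → L.dem t = some (dm t) := by
    intro t ht
    obtain ⟨d, hd⟩ := hdsome t ht
    rw [hd]; simp [hdmdef, hd]
  -- occupancy change
  have hoccZ : ∀ s, (occ B s : ℤ) = (occ A s : ℤ)
      + (if L.vtx t0 = s then 1 else 0) - (if L.vtx (cnext t0) = s then 1 else 0) := by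
    intro s
    have key := sum_removeLoop_diff A L hmem hdinj t0 ht0 dm hdm
      (fun _ s' => if s' = s then (1 : ℤ) else 0)
    rw [← occ_cast, ← occ_cast] at key
    have him : (univ.erase t0).image cnext = univ.erase (cnext t0) := by
      rw [Finset.image_erase cnext_injective,
        Finset.image_univ_of_surjective (Finite.surjective_of_injective cnext_injective)]
    have e1 : ∑ t ∈ univ.erase t0, (if L.vtx (cnext t) = s then (1 : ℤ) else 0)
        = ∑ t ∈ univ.erase (cnext t0), (if L.vtx t = s then (1 : ℤ) else 0) := by
      rw [← him, Finset.sum_image (fun x _ y _ h => cnext_injective h)]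
    have hsplit : ∑ t ∈ univ.erase t0,
        ((if L.vtx (cnext t) = s then (1 : ℤ) else 0) - (if L.vtx t = s then 1 else 0))
        = (if L.vtx t0 = s then 1 else 0) - (if L.vtx (cnext t0) = s then 1 else 0) := by
      rw [Finset.sum_sub_distrib, e1,
        Finset.sum_erase_eq_sub (Finset.mem_univ (cnext t0)),
        Finset.sum_erase_eq_sub (Finset.mem_univ t0)]
      ring
    rw [hsplit] at key
    linarith [key]
  have c1 : (occ B (L.vtx (cnext t0)) : ℤ) = (occ A (L.vtx (cnext t0)) : ℤ) - 1 := by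
    have h := hoccZ (L.vtx (cnext t0))
    rw [if_neg hv_ne, if_pos rfl] at h
    linarith
  have c2 : occ B (L.vtx t0) = occ A (L.vtx t0) + 1 := by
    have h := hoccZ (L.vtx t0)
    rw [if_pos rfl, if_neg (fun h' => hv_ne h'.symm)] at h
    omega
  have c3 : ∀ s, s ≠ L.vtx (cnext t0) → s ≠ L.vtx t0 → occ B s = occ A s := by
    intro s h1 h2
    have h := hoccZ s
    rw [if_neg (fun h' => h2 h'.symm), if_neg (fun h' => h1 h'.symm)] at h
    omega
  -- cost change
  have hCM : (∑ d, CM d (B d)) - (∑ d, CM d (A d)) = ∑ t ∈ univ.erase t0, edgeWt CM p A L t := by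
    rw [sum_removeLoop_diff A L hmem hdinj t0 ht0 dm hdm CM]
    refine Finset.sum_congr rfl ?_
    intro t ht
    have hd := hdm t (Finset.mem_erase.1 ht).1
    simp [edgeWt, hd]
  have hA1 : occ A (L.vtx (cnext t0)) = occ B (L.vtx (cnext t0)) + 1 := by omega
  have hpen : (∑ s, ∑ j ∈ Finset.Icc 1 (occ B s), p s j)
      - (∑ s, ∑ j ∈ Finset.Icc 1 (occ A s), p s j) = edgeWt CM p A L t0 := by
    set g : S → ℤ := fun s =>
      (∑ j ∈ Finset.Icc 1 (occ B s), p s j) - ∑ j ∈ Finset.Icc 1 (occ A s), p s j with hgdef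
    have hzero : ∀ s ∈ univ, s ∉ ({L.vtx t0, L.vtx (cnext t0)} : Finset S) → g s = 0 := by
      intro s _ hs
      simp only [Finset.mem_insert, Finset.mem_singleton] at hs
      push_neg at hs
      simp only [hgdef]
      rw [c3 s hs.2 hs.1, sub_self]
    have hsum : ∑ s, g s = g (L.vtx t0) + g (L.vtx (cnext t0)) := by
      rw [← Finset.sum_subset (Finset.subset_univ _) hzero, Finset.sum_pair hv_ne]
    have g1 : g (L.vtx t0) = p (L.vtx t0) (occ A (L.vtx t0) + 1) := by
      simp only [hgdef]
      rw [c2, Finset.sum_Icc_succ_top (by omega : 1 ≤ occ A (L.vtx t0) + 1)]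
      ring
    have g2 : g (L.vtx (cnext t0)) = - p (L.vtx (cnext t0)) (occ A (L.vtx (cnext t0))) := by
      simp only [hgdef]
      rw [hA1, Finset.sum_Icc_succ_top (by omega : 1 ≤ occ B (L.vtx (cnext t0)) + 1)]
      ring
    have hrw : (∑ s, ∑ j ∈ Finset.Icc 1 (occ B s), p s j)
        - (∑ s, ∑ j ∈ Finset.Icc 1 (occ A s), p s j) = ∑ s, g s := by
      rw [Finset.sum_sub_distrib]
    rw [hrw, hsum, g1, g2]
    simp [edgeWt, ht0, wpen, hA1]
    ring
  have hsplitLC : loopCost CM p A L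
      = edgeWt CM p A L t0 + ∑ t ∈ univ.erase t0, edgeWt CM p A L t := by
    rw [loopCost, ← Finset.add_sum_erase _ _ (Finset.mem_univ t0)]
  have c4 : cost CM p B = cost CM p A + loopCost CM p A L := by
    rw [cost, cost, hsplitLC]
    linarith [hCM, hpen]
  refine ⟨c1, c2, c3, c4, ?_⟩
  intro hneg hopt
  have h := hopt B
  rw [c4] at h
  linarith
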